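/- Let μ > 0 and let g : [0,∞) → ℝ be a C² function which is nonnegative, integrable with ∫₀^∞ g(v) dv = 1 and ∫₀^∞ v g(v) dv = μ, and which satisfies the stationary BDY equation g''(v) + g(0) g'(v) = 0 for all v ≥ 0 together with the Robin boundary condition g'(0) + g(0)² = 0. Then g(v) = (1/μ) e^{−v/μ} for all v ≥ 0; i.e. the Boltzmann–Gibbs density with mean μ is the unique equilibrium of the BDY PDE among probability densities with mean μ. -/

import Mathlib

open MeasureTheory Set Filter

/-- Helper: a function with zero derivative on `Ici 0` is constant there. -/
lemma const_on_Ici {f f' : ℝ → ℝ} (hf : ∀ v : ℝ, 0 ≤ v → HasDerivAt f (f' v) v)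
    (hzero : ∀ v : ℝ, 0 ≤ v → f' v = 0) : ∀ v : ℝ, 0 ≤ v → f v = f 0 := by
  intro v hv
  have hcont : ContinuousOn f (Icc 0 v) := fun x hx =>
    ((hf x hx.1).continuousAt).continuousWithinAt
  exact constant_of_has_deriv_right_zero hcont
    (fun x hx => by
      have := (hf x hx.1).hasDerivWithinAt (s := Ici x)
      rwa [hzero x hx.1] at this) v (by simp [hv])

theorem BDY_PDE_equilibrium_unique
    (μ : ℝ) (hμ : 0 < μ)
    (g g' g'' : ℝ → ℝ)
    (hg' : ∀ v : ℝ, 0 ≤ v → HasDerivAt g (g' v) v)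
    (hg'' : ∀ v : ℝ, 0 ≤ v → HasDerivAt g' (g'' v) v)
    (hcont : ContinuousOn g'' (Ici 0))
    (hnonneg : ∀ v : ℝ, 0 ≤ v → 0 ≤ g v)
    (hint : IntegrableOn g (Ioi 0))
    (hint1 : IntegrableOn (fun v => v * g v) (Ioi 0))
    (hmass : ∫ v in Ioi (0:ℝ), g v = 1)
    (hmean : ∫ v in Ioi (0:ℝ), v * g v = μ)
    (hODE : ∀ v : ℝ, 0 ≤ v → g'' v + g 0 * g' v = 0)
    (hBC : g' 0 + (g 0) ^ 2 = 0) :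
    ∀ v : ℝ, 0 ≤ v → g v = (1 / μ) * Real.exp (-v / μ) := by
  set a := g 0 with ha
  -- Step 1: g' v + a * g v = 0 on [0,∞)
  have step1 : ∀ v : ℝ, 0 ≤ v → g' v + a * g v = 0 := by
    have h := const_on_Ici (f := fun v => g' v + a * g v)
      (f' := fun v => g'' v + a * g' v)
      (fun v hv => (hg'' v hv).add ((hg' v hv).const_mul a))
      (fun v hv => hODE v hv)
    intro v hv
    have hv' := h v hv
    simp only [← ha] at hv'
    nlinarith [hv', hBC]
  -- Step 2: g v = a * exp (-(a*v)) on [0,∞)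
  have step2 : ∀ v : ℝ, 0 ≤ v → g v = a * Real.exp (-(a * v)) := by
    have h := const_on_Ici (f := fun v => g v * Real.exp (a * v))
      (f' := fun v => (g' v + a * g v) * Real.exp (a * v))
      (fun v hv => by
        have h1 : HasDerivAt (fun v : ℝ => Real.exp (a * v)) (a * Real.exp (a * v)) v := by
          simpa [mul_comm] using ((hasDerivAt_id v).const_mul a).exp
        have := (hg' v hv).mul h1
        exact this.congr_deriv (by ring))
      (fun v hv => by rw [step1 v hv, zero_mul])
    intro v hv
    have hv' := h v hv
    simp only [mul_zero, Real.exp_zero, mul_one, ← ha] at hv'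
    have hexp : Real.exp (a * v) ≠ 0 := Real.exp_ne_zero _
    rw [Real.exp_neg, eq_mul_inv_iff_mul_eq₀ hexp]; exact hv'
  -- a ≥ 0
  have ha0 : 0 ≤ a := hnonneg 0 le_rfl
  -- a ≠ 0
  have hane : a ≠ 0 := by
    intro h0
    have : ∫ v in Ioi (0:ℝ), g v = 0 := by
      rw [setIntegral_congr_fun measurableSet_Ioi
        (fun x hx => by rw [step2 x (le_of_lt hx), h0, zero_mul])]
      simp
    rw [hmass] at this; norm_num at this
  have hapos : 0 < a := lt_of_le_of_ne ha0 (Ne.symm hane)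
  -- mean computation: μ = 1/a
  have hmean' : ∫ v in Ioi (0:ℝ), v * g v = a⁻¹ := by
    rw [setIntegral_congr_fun measurableSet_Ioi
      (fun x hx => by rw [step2 x (le_of_lt hx)])]
    have key : ∫ x in Ioi (0:ℝ), x ^ (1:ℝ) * Real.exp (-a * x ^ (1:ℝ)) =
        a ^ (-(1 + 1) / 1 : ℝ) * (1 / 1) * Real.Gamma ((1 + 1) / 1) := by
      exact integral_rpow_mul_exp_neg_mul_rpow one_pos (by norm_num) hapos
    have key' : ∫ x in Ioi (0:ℝ), x * Real.exp (-(a * x)) = a ^ (-2 : ℝ) := by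
      rw [setIntegral_congr_fun (μ := volume) measurableSet_Ioi
        (fun x hx => by
          rw [show x * Real.exp (-(a * x)) = x ^ (1:ℝ) * Real.exp (-a * x ^ (1:ℝ)) by
            rw [Real.rpow_one]; ring_nf]), key]
      norm_num [Real.Gamma_two]
    calc ∫ x in Ioi (0:ℝ), x * (a * Real.exp (-(a * x)))
        = a * ∫ x in Ioi (0:ℝ), x * Real.exp (-(a * x)) := by
          rw [← integral_const_mul]
          exact setIntegral_congr_fun measurableSet_Ioi (fun x _ => by ring)
      _ = a * a ^ (-2 : ℝ) := by rw [key']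
      _ = a⁻¹ := by
          have h2 : a * a ^ (-2 : ℝ) = a ^ ((1 + -2 : ℝ)) := by
            rw [Real.rpow_add hapos, Real.rpow_one]
          rw [h2]
          norm_num [Real.rpow_neg_one]
  have haμ : a = 1 / μ := by
    rw [hmean'] at hmean
    field_simp at hmean ⊢
    linear_combination -hmean
  intro v hv
  rw [step2 v hv, haμ]
  congr 1
  rw [neg_div]
  congr 1
  field_simp
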